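/- Let (A, 𝒜, μ) be a measure space, 𝒢 ⊂ 𝒜 a sub-σ-algebra with the restricted measure σ-finite, and Y a Banach space. Then there exists a contractive projection E^∞_{𝒢,Y} on L^∞(A; Y) with range L^∞(A, 𝒢; Y) such that ∫_F f dμ = ∫_F E^∞_{𝒢,Y} f dμ for all f ∈ L^∞(A; Y) and all F ∈ 𝒢 with μ(F) < ∞, and such an operator is unique. -/

import Mathlib

open MeasureTheory Set Filter Topology
open scoped NNReal ENNReal
set_option linter.unusedSectionVars false

namespace CondexpLinftyAux

lemma spanningSetsIndex_le_of_mem {β : Type*} {mβ : MeasurableSpace β} {ν : Measure β}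
    [SigmaFinite ν] {a : β} {n : ℕ} (h : a ∈ spanningSets ν n) :
    spanningSetsIndex ν a ≤ n := by
  by_contra hlt
  push_neg at hlt
  obtain ⟨k, hk⟩ := Nat.exists_eq_succ_of_ne_zero (by omega : spanningSetsIndex ν a ≠ 0)
  have hd := mem_disjointed_spanningSetsIndex ν a
  rw [hk, ← Nat.succ_eq_succ, disjointed_succ _ (not_isMax k)] at hd
  exact hd.2 (le_partialSups_of_le (spanningSets ν) (by omega : n ≤ k) h)

variable {α : Type*} {m m0 : MeasurableSpace α} {μ : Measure α}
  {Y : Type*} [NormedAddCommGroup Y] [NormedSpace ℝ Y] [CompleteSpace Y]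

lemma condexp_comp_clm (hm : m ≤ m0) [SigmaFinite (μ.trim hm)] {φ : α → Y}
    (hφ : Integrable φ μ) (T : Y →L[ℝ] ℝ) :
    (fun a => T ((μ[φ|m]) a)) =ᵐ[μ] μ[fun a => T (φ a)|m] :=
  ae_eq_condExp_of_forall_setIntegral_eq hm (T.integrable_comp hφ)
    (fun _ _ _ => (T.integrable_comp integrable_condExp).integrableOn)
    (fun s hs hμs => by
      rw [T.integral_comp_comm integrable_condExp.integrableOn,
          T.integral_comp_comm hφ.integrableOn, setIntegral_condExp hm hφ hs])
    ⟨fun a => T ((μ[φ|m]) a), T.continuous.comp_stronglyMeasurable stronglyMeasurable_condExp,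
      Filter.EventuallyEq.rfl⟩

lemma ae_norm_condexp_le (hm : m ≤ m0) [SigmaFinite (μ.trim hm)] {φ : α → Y}
    (hφ : Integrable φ μ) {C : ℝ≥0} (hbdd : ∀ᵐ a ∂μ, ‖φ a‖ ≤ C) :
    ∀ᵐ a ∂μ, ‖(μ[φ|m]) a‖ ≤ C := by
  obtain ⟨t, htc, hts⟩ := (stronglyMeasurable_condExp (μ := μ) (f := φ) (m := m)).isSeparable_range
  choose T hT1 hT2 using fun y : Y => exists_dual_vector'' ℝ y
  have hae : ∀ᵐ a ∂μ, ∀ y ∈ t, T y ((μ[φ|m]) a) ≤ C := by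
    rw [ae_ball_iff htc]
    intro y hy
    have h1 := condexp_comp_clm hm hφ (T y)
    have h2 : ∀ᵐ a ∂μ, |(μ[fun a => T y (φ a)|m]) a| ≤ C := by
      refine ae_bdd_condExp_of_ae_bdd (hbdd.mono fun a ha => ?_)
      calc |T y (φ a)| = ‖T y (φ a)‖ := rfl
        _ ≤ ‖T y‖ * ‖φ a‖ := (T y).le_opNorm _
        _ ≤ 1 * C := by
            apply mul_le_mul (hT1 y) ha (norm_nonneg _) zero_le_one
        _ = C := one_mul _
    filter_upwards [h1, h2] with a ha1 ha2
    rw [ha1]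
    exact le_of_abs_le ha2
  filter_upwards [hae] with a ha
  have hmem : (μ[φ|m]) a ∈ closure t := hts (mem_range_self a)
  by_contra hgt
  push_neg at hgt
  set z := (μ[φ|m]) a with hz
  set ε : ℝ := (‖z‖ - C) / 3 with hε
  have hεpos : 0 < ε := by
    rw [hε]; linarith
  obtain ⟨y, hyt, hy⟩ := Metric.mem_closure_iff.1 hmem ε hεpos
  have h1 : ‖z‖ ≤ ‖y‖ + ε := by
    calc ‖z‖ = ‖y + (z - y)‖ := by rw [show y + (z - y) = z from by abel]
      _ ≤ ‖y‖ + ‖z - y‖ := norm_add_le _ _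
      _ ≤ ‖y‖ + ε := by
          have : ‖z - y‖ = dist z y := (dist_eq_norm z y).symm
          rw [this]; linarith [hy.le]
  have h2 : ‖y‖ ≤ (C : ℝ) + ε := by
    have := hT2 y
    calc ‖y‖ = T y y := (hT2 y).symm
      _ = T y z + T y (y - z) := by rw [← map_add, show z + (y - z) = y from by abel]
      _ ≤ C + ‖T y (y - z)‖ := by
          have := ha y hyt
          have h3 : T y (y - z) ≤ ‖T y (y - z)‖ := le_abs_self _
          linarith
      _ ≤ C + ‖T y‖ * ‖y - z‖ := by linarith [(T y).le_opNorm (y - z)]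
      _ ≤ C + 1 * ε := by
          have h4 : ‖y - z‖ = dist z y := by rw [dist_eq_norm, norm_sub_rev]
          have h5 : ‖T y‖ * ‖y - z‖ ≤ 1 * ‖y - z‖ :=
            mul_le_mul_of_nonneg_right (hT1 y) (norm_nonneg _)
          have h6 : (1 : ℝ) * ‖y - z‖ ≤ 1 * ε := by rw [h4]; linarith [hy.le]
          linarith
      _ = C + ε := by ring
  have : ‖z‖ ≤ C + 2 * ε := by linarith
  rw [hε] at this
  linarith

lemma ae_of_ae_restrict_spanningSets (hm : m ≤ m0) [SigmaFinite (μ.trim hm)] {p : α → Prop}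
    (h : ∀ n, ∀ᵐ a ∂μ.restrict (spanningSets (μ.trim hm) n), p a) : ∀ᵐ a ∂μ, p a := by
  rw [ae_iff]
  have hsub : {a | ¬ p a} ⊆ ⋃ n, {a | ¬ p a} ∩ spanningSets (μ.trim hm) n := by
    intro a ha
    have ham : a ∈ ⋃ n, spanningSets (μ.trim hm) n := by
      rw [iUnion_spanningSets]; exact mem_univ a
    obtain ⟨n, hn⟩ := mem_iUnion.1 ham
    exact mem_iUnion.2 ⟨n, ha, hn⟩
  refine measure_mono_null hsub (measure_iUnion_null fun n => ?_)
  have hn := ae_iff.1 (h n)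
  rwa [Measure.restrict_apply' (hm _ (measurableSet_spanningSets _ n))] at hn

variable (μ) in
/-- The conditional expectation of `f` on `L^∞`: on each spanning set of the σ-finite trimmed
measure, it is the usual conditional expectation of the truncation of `f`. -/
noncomputable def cexG (hm : m ≤ m0) [SigmaFinite (μ.trim hm)] (f : α → Y) : α → Y :=
  fun a => (μ[(spanningSets (μ.trim hm) (spanningSetsIndex (μ.trim hm) a)).indicator f|m]) a

section G

variable (hm : m ≤ m0) [SigmaFinite (μ.trim hm)] {f f' : α → Y}

lemma cexG_stronglyMeasurable (f : α → Y) : StronglyMeasurable[m] (cexG μ hm f) := by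
  have hpart : ∀ n : ℕ, StronglyMeasurable[m] (fun a => ∑ k ∈ Finset.range (n + 1),
      (disjointed (spanningSets (μ.trim hm)) k).indicator
        (μ[(spanningSets (μ.trim hm) k).indicator f|m]) a) := by
    intro n
    refine Finset.stronglyMeasurable_fun_sum _ fun k _ => ?_
    exact stronglyMeasurable_condExp.indicator
      (MeasurableSet.disjointed (measurableSet_spanningSets _) k)
  refine stronglyMeasurable_of_tendsto atTop hpart ?_
  · rw [tendsto_pi_nhds]
    intro a
    apply tendsto_atTop_of_eventually_const (i₀ := spanningSetsIndex (μ.trim hm) a)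
    intro n hn
    rw [Finset.sum_eq_single_of_mem (spanningSetsIndex (μ.trim hm) a)
        (Finset.mem_range.2 (by omega))]
    · exact Set.indicator_of_mem (mem_disjointed_spanningSetsIndex _ a) _
    · intro k _ hkne
      refine Set.indicator_of_notMem (fun hmem => hkne ?_) _
      exact ((spanningSetsIndex_eq_iff (μ.trim hm)).2 hmem).symm

lemma cexG_restrict (hint : ∀ k, Integrable ((spanningSets (μ.trim hm) k).indicator f) μ)
    (n : ℕ) :
    cexG μ hm f =ᵐ[μ.restrict (spanningSets (μ.trim hm) n)]
      μ[(spanningSets (μ.trim hm) n).indicator f|m] := by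
  have hcons : ∀ᵐ a ∂μ, ∀ k, k ≤ n →
      (μ[(spanningSets (μ.trim hm) k).indicator f|m]) a =
      (spanningSets (μ.trim hm) k).indicator
        (μ[(spanningSets (μ.trim hm) n).indicator f|m]) a := by
    rw [ae_all_iff]
    intro k
    by_cases hk : k ≤ n
    · have h1 : (spanningSets (μ.trim hm) k).indicator f =
          (spanningSets (μ.trim hm) k).indicator ((spanningSets (μ.trim hm) n).indicator f) := by
        rw [Set.indicator_indicator, Set.inter_eq_left.2 (monotone_spanningSets _ hk)]
      have h2 := condExp_indicator (m := m) (hint n) (measurableSet_spanningSets (μ.trim hm) k)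
      rw [← h1] at h2
      exact h2.mono fun a ha => fun _ => ha
    · exact Filter.Eventually.of_forall fun a hkn => absurd hkn hk
  filter_upwards [ae_restrict_of_ae hcons,
    ae_restrict_mem (hm _ (measurableSet_spanningSets _ n))] with a ha hamem
  have hidx : spanningSetsIndex (μ.trim hm) a ≤ n := spanningSetsIndex_le_of_mem hamem
  have := ha _ hidx
  rw [cexG, this, Set.indicator_of_mem (mem_spanningSetsIndex _ a)]

lemma cexG_congr (h : f =ᵐ[μ] f') : cexG μ hm f =ᵐ[μ] cexG μ hm f' := by
  have hae : ∀ᵐ a ∂μ, ∀ n,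
      (μ[(spanningSets (μ.trim hm) n).indicator f|m]) a =
      (μ[(spanningSets (μ.trim hm) n).indicator f'|m]) a := by
    rw [ae_all_iff]
    intro n
    exact condExp_congr_ae (h.indicator (s := spanningSets (μ.trim hm) n))
  exact hae.mono fun a ha => ha _

lemma cexG_add (hint : ∀ k, Integrable ((spanningSets (μ.trim hm) k).indicator f) μ)
    (hint' : ∀ k, Integrable ((spanningSets (μ.trim hm) k).indicator f') μ) :
    cexG μ hm (f + f') =ᵐ[μ] cexG μ hm f + cexG μ hm f' := by
  have hae : ∀ᵐ a ∂μ, ∀ n,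
      (μ[(spanningSets (μ.trim hm) n).indicator (f + f')|m]) a =
      (μ[(spanningSets (μ.trim hm) n).indicator f|m]) a +
      (μ[(spanningSets (μ.trim hm) n).indicator f'|m]) a := by
    rw [ae_all_iff]
    intro n
    have h1 : (spanningSets (μ.trim hm) n).indicator (f + f') =
        (spanningSets (μ.trim hm) n).indicator f +
        (spanningSets (μ.trim hm) n).indicator f' := by
      classical
      ext a; by_cases h : a ∈ spanningSets (μ.trim hm) n <;>
        simp [Set.indicator_apply, h]
    rw [h1]
    exact (condExp_add (hint n) (hint' n) m).mono fun a ha => ha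
  refine hae.mono fun a ha => ?_
  simp only [cexG, Pi.add_apply, Pi.smul_apply]
  exact ha _

lemma cexG_smul (c : ℝ) (f : α → Y) : cexG μ hm (c • f) =ᵐ[μ] c • cexG μ hm f := by
  have hae : ∀ᵐ a ∂μ, ∀ n,
      (μ[(spanningSets (μ.trim hm) n).indicator (c • f)|m]) a =
      c • (μ[(spanningSets (μ.trim hm) n).indicator f|m]) a := by
    rw [ae_all_iff]
    intro n
    have h1 : (spanningSets (μ.trim hm) n).indicator (c • f) =
        c • (spanningSets (μ.trim hm) n).indicator f := by
      classical
      ext a; by_cases h : a ∈ spanningSets (μ.trim hm) n <;>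
        simp [Set.indicator_apply, h]
    rw [h1]
    exact (condExp_smul c _ m).mono fun a ha => ha
  refine hae.mono fun a ha => ?_
  simp only [cexG, Pi.add_apply, Pi.smul_apply]
  exact ha _

lemma cexG_norm_le (hint : ∀ k, Integrable ((spanningSets (μ.trim hm) k).indicator f) μ)
    {C : ℝ≥0} (hC : ∀ᵐ a ∂μ, ‖f a‖ ≤ C) : ∀ᵐ a ∂μ, ‖cexG μ hm f a‖ ≤ C := by
  have hae : ∀ᵐ a ∂μ, ∀ n, ‖(μ[(spanningSets (μ.trim hm) n).indicator f|m]) a‖ ≤ C := by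
    rw [ae_all_iff]
    intro n
    refine ae_norm_condexp_le hm (hint n) (hC.mono fun a ha => ?_)
    classical
    rw [Set.indicator_apply]
    split
    · exact ha
    · simp only [norm_zero]; exact C.coe_nonneg
  exact hae.mono fun a ha => ha _

lemma cexG_of_stronglyMeasurable
    (hint : ∀ k, Integrable ((spanningSets (μ.trim hm) k).indicator f) μ)
    {g0 : α → Y} (hg0 : StronglyMeasurable[m] g0) (hfg : f =ᵐ[μ] g0) :
    cexG μ hm f =ᵐ[μ] f := by
  apply ae_of_ae_restrict_spanningSets hm
  intro n
  have h1 := cexG_restrict hm hint n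
  have hind : (spanningSets (μ.trim hm) n).indicator f
      =ᵐ[μ] (spanningSets (μ.trim hm) n).indicator g0 :=
    hfg.indicator (s := spanningSets (μ.trim hm) n)
  have h2 : μ[(spanningSets (μ.trim hm) n).indicator f|m]
      =ᵐ[μ] (spanningSets (μ.trim hm) n).indicator g0 := by
    refine (condExp_congr_ae hind).trans ?_
    rw [condExp_of_stronglyMeasurable hm
      (hg0.indicator (measurableSet_spanningSets _ n)) ((hint n).congr hind)]
  filter_upwards [h1, ae_restrict_of_ae h2, ae_restrict_of_ae hfg,
    ae_restrict_mem (hm _ (measurableSet_spanningSets _ n))] with a ha1 ha2 ha3 hamem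
  rw [ha1, ha2, Set.indicator_of_mem hamem, ← ha3]

end G

section LpTop

variable (hm : m ≤ m0) [SigmaFinite (μ.trim hm)]

lemma spanning_fin (n : ℕ) : μ (spanningSets (μ.trim hm) n) < ⊤ := by
  rw [← trim_measurableSet_eq hm (measurableSet_spanningSets _ n)]
  exact measure_spanningSets_lt_top _ n

lemma lp_top_integrableOn (f : Lp Y ⊤ μ) {s : Set α} (hμs : μ s < ⊤) :
    IntegrableOn (⇑f) s μ := by
  haveI : Fact (μ s < ⊤) := ⟨hμs⟩
  exact memLp_one_iff_integrable.1 (((Lp.memLp f).restrict s).mono_exponent le_top)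

lemma lp_top_hint (f : Lp Y ⊤ μ) (n : ℕ) :
    Integrable ((spanningSets (μ.trim hm) n).indicator ⇑f) μ := by
  rw [integrable_indicator_iff (hm _ (measurableSet_spanningSets _ n))]
  exact lp_top_integrableOn f (spanning_fin hm n)

lemma lp_top_ae_norm_le (f : Lp Y ⊤ μ) : ∀ᵐ a ∂μ, ‖f a‖ ≤ ‖f‖₊ := by
  have h := ae_le_eLpNormEssSup (f := ⇑f) (μ := μ)
  have hne : eLpNorm (⇑f) ⊤ μ ≠ ⊤ := Lp.eLpNorm_ne_top f
  filter_upwards [h] with a ha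
  have ha' : (‖f a‖₊ : ℝ≥0∞) ≤ eLpNorm (⇑f) ⊤ μ := by rwa [eLpNorm_exponent_top]
  rw [Lp.nnnorm_def]
  rw [← ENNReal.coe_toNNReal hne, ENNReal.coe_le_coe] at ha'
  exact_mod_cast ha'

lemma memG (f : Lp Y ⊤ μ) : MemLp (cexG μ hm ⇑f) ⊤ μ :=
  memLp_top_of_bound ((cexG_stronglyMeasurable hm ⇑f).mono hm).aestronglyMeasurable ‖f‖
    ((cexG_norm_le hm (lp_top_hint hm f) (lp_top_ae_norm_le f)).mono fun a ha => by
      simpa [coe_nnnorm] using ha)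

variable (Y) in
/-- The conditional expectation on `L^∞` as a continuous linear map. -/
noncomputable def condexpLinftyL : Lp Y ⊤ μ →L[ℝ] Lp Y ⊤ μ :=
  LinearMap.mkContinuous
    { toFun := fun f => (memG hm f).toLp _
      map_add' := fun f g => by
        apply Lp.ext
        have e2 : ⇑((memG hm f).toLp _ + (memG hm g).toLp _)
            =ᵐ[μ] cexG μ hm ⇑f + cexG μ hm ⇑g := by
          filter_upwards [Lp.coeFn_add ((memG hm f).toLp _) ((memG hm g).toLp _),
            MemLp.coeFn_toLp (memG hm f), MemLp.coeFn_toLp (memG hm g)] with a h1 h2 h3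
          rw [h1, Pi.add_apply, Pi.add_apply, h2, h3]
        have e1 : ⇑((memG hm (f + g)).toLp (cexG μ hm ⇑(f + g)))
            =ᵐ[μ] cexG μ hm ⇑(f + g) := MemLp.coeFn_toLp _
        exact (e1.trans ((cexG_congr hm (Lp.coeFn_add f g)).trans
          (cexG_add hm (lp_top_hint hm f) (lp_top_hint hm g)))).trans e2.symm
      map_smul' := fun c f => by
        apply Lp.ext
        have e2 : ⇑(c • (memG hm f).toLp (cexG μ hm ⇑f)) =ᵐ[μ] c • cexG μ hm ⇑f := by
          filter_upwards [Lp.coeFn_smul c ((memG hm f).toLp _),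
            MemLp.coeFn_toLp (memG hm f)] with a h1 h2
          rw [h1, Pi.smul_apply, Pi.smul_apply, h2]
        have e1 : ⇑((memG hm (c • f)).toLp (cexG μ hm ⇑(c • f)))
            =ᵐ[μ] cexG μ hm ⇑(c • f) := MemLp.coeFn_toLp _
        exact (e1.trans ((cexG_congr hm (Lp.coeFn_smul c f)).trans
          (cexG_smul hm c ⇑f))).trans e2.symm }
    1 (fun f => by
      rw [one_mul]
      show ‖(memG hm f).toLp _‖ ≤ ‖f‖
      rw [Lp.norm_toLp]
      have hb : ∀ᵐ a ∂μ, ‖cexG μ hm (⇑f) a‖ ≤ ‖f‖ :=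
        (cexG_norm_le hm (lp_top_hint hm f) (lp_top_ae_norm_le f)).mono fun a ha => by
          simpa [coe_nnnorm] using ha
      have h1 : eLpNorm (cexG μ hm ⇑f) ⊤ μ ≤ ENNReal.ofReal ‖f‖ := by
        have := eLpNorm_le_of_ae_bound (p := (⊤ : ℝ≥0∞)) hb
        simpa using this
      calc (eLpNorm (cexG μ hm ⇑f) ⊤ μ).toReal ≤ (ENNReal.ofReal ‖f‖).toReal :=
            ENNReal.toReal_mono ENNReal.ofReal_ne_top h1
        _ = ‖f‖ := ENNReal.toReal_ofReal (norm_nonneg f))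

lemma condexpLinftyL_coeFn (f : Lp Y ⊤ μ) :
    ⇑(condexpLinftyL Y hm f) =ᵐ[μ] cexG μ hm ⇑f :=
  MemLp.coeFn_toLp (memG hm f)

end LpTop

end CondexpLinftyAux

open CondexpLinftyAux

/-- **Conditional expectation on `L^∞(A;Y)`.** Let `m ≤ m0` be a sub-σ-algebra with
σ-finite trace and `Y` a Banach space. There is a unique contractive projection
`P` on `L^∞(μ; Y)` whose range is `L^∞(A, 𝒢; Y)` (the classes with a strongly
`𝒢`-measurable representative) and which satisfies `∫_F f = ∫_F P f` for every
`𝒢`-measurable set `F` of finite measure. -/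
theorem exists_unique_condexp_linfty_vector_valued
    {α : Type*} {m m0 : MeasurableSpace α} (μ : Measure α) (hm : m ≤ m0)
    [SigmaFinite (μ.trim hm)]
    (Y : Type*) [NormedAddCommGroup Y] [NormedSpace ℝ Y] [CompleteSpace Y] :
    ∃! P : Lp Y ⊤ μ →L[ℝ] Lp Y ⊤ μ,
      -- contractive
      ‖P‖ ≤ 1 ∧
      -- projection
      (∀ f : Lp Y ⊤ μ, P (P f) = P f) ∧
      -- range contained in `L^∞(A, 𝒢; Y)`
      (∀ f : Lp Y ⊤ μ, ∃ g : α → Y, StronglyMeasurable[m] g ∧ ⇑(P f) =ᵐ[μ] g) ∧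
      -- `P` fixes `L^∞(A, 𝒢; Y)`, so its range is all of `L^∞(A, 𝒢; Y)`
      (∀ f : Lp Y ⊤ μ, (∃ g : α → Y, StronglyMeasurable[m] g ∧ ⇑f =ᵐ[μ] g) →
        P f = f) ∧
      -- averaging property on `𝒢`-sets of finite measure
      (∀ (f : Lp Y ⊤ μ) (F : Set α), MeasurableSet[m] F → μ F < ⊤ →
        ∫ a in F, f a ∂μ = ∫ a in F, (P f) a ∂μ) := by
  set P := condexpLinftyL (μ := μ) Y hm with hP
  have hrange : ∀ f : Lp Y ⊤ μ, ∃ g : α → Y, StronglyMeasurable[m] g ∧ ⇑(P f) =ᵐ[μ] g :=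
    fun f => ⟨cexG μ hm ⇑f, cexG_stronglyMeasurable hm ⇑f, condexpLinftyL_coeFn hm f⟩
  have hfix : ∀ f : Lp Y ⊤ μ, (∃ g : α → Y, StronglyMeasurable[m] g ∧ ⇑f =ᵐ[μ] g) → P f = f := by
    rintro f ⟨g0, hg0, hfg0⟩
    apply Lp.ext
    exact (condexpLinftyL_coeFn hm f).trans
      (cexG_of_stronglyMeasurable hm (lp_top_hint hm f) hg0 hfg0)
  have havg : ∀ (f : Lp Y ⊤ μ) (F : Set α), MeasurableSet[m] F → μ F < ⊤ →
      ∫ a in F, f a ∂μ = ∫ a in F, (P f) a ∂μ := by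
    intro f F hF hμF
    set S := spanningSets (μ.trim hm) with hS
    have hSm : ∀ n, MeasurableSet[m] (S n) := measurableSet_spanningSets _
    have hφm : ∀ n, MeasurableSet (F ∩ S n) := fun n => (hm _ hF).inter (hm _ (hSm n))
    have hφmono : Monotone fun n => F ∩ S n := fun i j hij =>
      Set.inter_subset_inter_right F (monotone_spanningSets _ hij)
    have hφU : ⋃ n, F ∩ S n = F := by
      rw [← Set.inter_iUnion, iUnion_spanningSets, Set.inter_univ]
    have hIf : IntegrableOn (⇑f) F μ := lp_top_integrableOn f hμF
    have hIPf : IntegrableOn (⇑(P f)) F μ := lp_top_integrableOn (P f) hμF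
    have h1 : Tendsto (fun n => ∫ a in F ∩ S n, f a ∂μ) atTop (𝓝 (∫ a in F, f a ∂μ)) := by
      have := tendsto_setIntegral_of_monotone (f := ⇑f) hφm hφmono (hφU ▸ hIf)
      rwa [hφU] at this
    have h2 : Tendsto (fun n => ∫ a in F ∩ S n, (P f) a ∂μ) atTop
        (𝓝 (∫ a in F, (P f) a ∂μ)) := by
      have := tendsto_setIntegral_of_monotone (f := ⇑(P f)) hφm hφmono (hφU ▸ hIPf)
      rwa [hφU] at this
    have h3 : ∀ n, ∫ a in F ∩ S n, f a ∂μ = ∫ a in F ∩ S n, (P f) a ∂μ := by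
      intro n
      have e1 : ∫ a in F ∩ S n, (P f) a ∂μ = ∫ a in F ∩ S n, cexG μ hm (⇑f) a ∂μ :=
        integral_congr_ae (ae_restrict_of_ae (condexpLinftyL_coeFn hm f))
      have e2 : ∫ a in F ∩ S n, cexG μ hm (⇑f) a ∂μ
          = ∫ a in F ∩ S n, (μ[(S n).indicator ⇑f|m]) a ∂μ := by
        refine integral_congr_ae (ae_restrict_of_ae_restrict_of_subset
          Set.inter_subset_right ?_)
        exact cexG_restrict hm (lp_top_hint hm f) n
      have e3 : ∫ a in F ∩ S n, (μ[(S n).indicator ⇑f|m]) a ∂μ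
          = ∫ a in F ∩ S n, (S n).indicator (⇑f) a ∂μ :=
        setIntegral_condExp hm (lp_top_hint hm f n) (hF.inter (hSm n))
      have e4 : ∫ a in F ∩ S n, (S n).indicator (⇑f) a ∂μ = ∫ a in F ∩ S n, f a ∂μ := by
        refine setIntegral_congr_fun (hφm n) fun a ha => ?_
        exact Set.indicator_of_mem ha.2 _
      rw [e1, e2, e3, e4]
    exact tendsto_nhds_unique (h1.congr fun n => h3 n) h2
  refine ⟨P, ⟨?_, ?_, hrange, hfix, havg⟩, ?_⟩
  · exact LinearMap.mkContinuous_norm_le _ zero_le_one _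
  · intro f
    exact hfix (P f) (hrange f)
  · rintro Q ⟨-, -, hQrange, -, hQavg⟩
    ext f
    obtain ⟨gq, hgqm, hq⟩ := hQrange f
    obtain ⟨gp, hgpm, hp⟩ := hrange f
    have key : gq =ᵐ[μ] gp := by
      refine ae_eq_of_forall_setIntegral_eq_of_sigmaFinite' hm
        (fun s _ hμs => ((lp_top_integrableOn (Q f) hμs).congr (ae_restrict_of_ae hq)))
        (fun s _ hμs => ((lp_top_integrableOn (P f) hμs).congr (ae_restrict_of_ae hp)))
        (fun s hs hμs => ?_) ⟨gq, hgqm, Filter.EventuallyEq.rfl⟩ ⟨gp, hgpm, Filter.EventuallyEq.rfl⟩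
      calc ∫ a in s, gq a ∂μ = ∫ a in s, (Q f) a ∂μ :=
            integral_congr_ae (ae_restrict_of_ae hq.symm)
        _ = ∫ a in s, f a ∂μ := (hQavg f s hs hμs).symm
        _ = ∫ a in s, (P f) a ∂μ := havg f s hs hμs
        _ = ∫ a in s, gp a ∂μ := integral_congr_ae (ae_restrict_of_ae hp)
    exact hq.trans (key.trans hp.symm)
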